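/- For every integer m ≥ 1, the product over all integers a with 1 ≤ a < m/2 of (2cos(aπ/m))² equals 1 if m is odd and equals m/2 if m is even. -/

import Mathlib

open Real Finset Polynomial

lemma prod_one_add_zeta (m : ℕ) (hm : 1 ≤ m) :
    ∏ a ∈ (Finset.range m).filter (fun a => 1 ≤ a ∧ 2 * a ≠ m),
      (1 + Complex.exp (2 * Real.pi * Complex.I / m) ^ a) =
    if m % 2 = 1 then 1 else (m : ℂ) / 2 := by
  set ζ : ℂ := Complex.exp (2 * Real.pi * Complex.I / m) with hζdef
  have hζ : IsPrimitiveRoot ζ m := Complex.isPrimitiveRoot_exp m (by omega)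
  have hpoly : (X ^ m - C 1 : ℂ[X]) = ∏ i ∈ Finset.range m, (X - C (ζ ^ i * 1)) :=
    X_pow_sub_C_eq_prod hζ (by omega) (one_pow m)
  simp only [mul_one, map_one] at hpoly
  rcases Nat.even_or_odd m with he | ho
  · -- even case
    obtain ⟨n, hn⟩ := he
    have hn1 : 1 ≤ n := by omega
    have hζn : ζ ^ n = -1 := by
      have h2 : (ζ ^ n - 1) * (ζ ^ n + 1) = 0 := by
        have h3 := hζ.pow_eq_one
        have h4 : ζ ^ m = ζ ^ n * ζ ^ n := by rw [← pow_add, ← hn]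
        rw [h4] at h3
        linear_combination h3
      rcases mul_eq_zero.mp h2 with h | h
      · exact absurd (by linear_combination h) (hζ.pow_ne_one_of_pos_of_lt (by omega) (by omega))
      · linear_combination h
    have h0mem : (0 : ℕ) ∈ Finset.range m := Finset.mem_range.mpr (by omega)
    have hnmem : n ∈ (Finset.range m).erase 0 := by
      rw [Finset.mem_erase, Finset.mem_range]; omega
    rw [← Finset.mul_prod_erase _ _ h0mem, ← Finset.mul_prod_erase _ _ hnmem,
      pow_zero, map_one, hζn] at hpoly
    have hne : ((X : ℂ[X]) - 1) * (X - C (-1)) ≠ 0 :=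
      mul_ne_zero (X_sub_C_ne_zero 1) (X_sub_C_ne_zero (-1))
    have hcancel : ∏ i ∈ ((Finset.range m).erase 0).erase n, (X - C (ζ ^ i)) =
        ∑ k ∈ Finset.range n, ((X : ℂ[X]) ^ 2) ^ k := by
      apply mul_left_cancel₀ hne
      have hg := geom_sum_mul ((X : ℂ[X]) ^ 2) n
      have hXm : ((X : ℂ[X]) ^ 2) ^ n = X ^ m := by rw [← pow_mul]; congr 1; omega
      rw [hXm] at hg
      calc ((X : ℂ[X]) - 1) * (X - C (-1)) * ∏ i ∈ ((Finset.range m).erase 0).erase n,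
            (X - C (ζ ^ i))
          = (X - C 1) * ((X - C (-1)) * ∏ i ∈ ((Finset.range m).erase 0).erase n,
            (X - C (ζ ^ i))) := by rw [map_one]; ring
        _ = X ^ m - 1 := hpoly.symm
        _ = ((X : ℂ[X]) - 1) * (X - C (-1)) * ∑ k ∈ Finset.range n, ((X : ℂ[X]) ^ 2) ^ k := by
            rw [map_neg, map_one]
            linear_combination -hg
    apply_fun Polynomial.eval (-1 : ℂ) at hcancel
    simp only [eval_prod, eval_sub, eval_X, eval_C, eval_finset_sum, eval_pow] at hcancel
    have hval : ∏ i ∈ ((Finset.range m).erase 0).erase n, ((-1 : ℂ) - ζ ^ i) = n := by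
      rw [hcancel]
      simp
    have hset : (Finset.range m).filter (fun a => 1 ≤ a ∧ 2 * a ≠ m) =
        ((Finset.range m).erase 0).erase n := by
      ext a
      simp only [Finset.mem_filter, Finset.mem_erase, Finset.mem_range]
      omega
    rw [hset, if_neg (by omega)]
    have hcard : (((Finset.range m).erase 0).erase n).card = m - 2 := by
      rw [Finset.card_erase_of_mem hnmem, Finset.card_erase_of_mem h0mem, Finset.card_range]
      omega
    calc ∏ a ∈ ((Finset.range m).erase 0).erase n, (1 + ζ ^ a)
        = ∏ a ∈ ((Finset.range m).erase 0).erase n, (-1 : ℂ) * (-1 - ζ ^ a) := by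
          apply Finset.prod_congr rfl; intro a _; ring
      _ = (-1) ^ (((Finset.range m).erase 0).erase n).card *
          ∏ a ∈ ((Finset.range m).erase 0).erase n, ((-1 : ℂ) - ζ ^ a) := by
          rw [Finset.prod_mul_distrib, Finset.prod_const]
      _ = (m : ℂ) / 2 := by
          rw [hval, hcard, Even.neg_one_pow ⟨n - 1, by omega⟩]
          have : (m : ℂ) = 2 * n := by rw [hn]; push_cast; ring
          rw [this]; ring
  · -- odd case
    have hset : (Finset.range m).filter (fun a => 1 ≤ a ∧ 2 * a ≠ m) =
        (Finset.range m).erase 0 := by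
      ext a
      simp only [Finset.mem_filter, Finset.mem_erase, Finset.mem_range]
      obtain ⟨k, hk⟩ := ho
      omega
    rw [hset, if_pos (Nat.odd_iff.mp ho)]
    apply_fun Polynomial.eval (-1 : ℂ) at hpoly
    simp only [eval_sub, eval_pow, eval_X, eval_one, eval_prod, eval_sub, eval_C] at hpoly
    rw [← Finset.mul_prod_erase _ _ (Finset.mem_range.mpr (by omega : 0 < m)),
      pow_zero, ho.neg_one_pow] at hpoly
    have h1 : ∏ i ∈ (Finset.range m).erase 0, ((-1 : ℂ) - ζ ^ i) = 1 := by
      have : (-1 - 1 : ℂ) ≠ 0 := by norm_num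
      field_simp at hpoly
      exact hpoly.symm
    have hcard : ((Finset.range m).erase 0).card = m - 1 := by
      rw [Finset.card_erase_of_mem (Finset.mem_range.mpr (by omega)), Finset.card_range]
    calc ∏ a ∈ (Finset.range m).erase 0, (1 + ζ ^ a)
        = ∏ a ∈ (Finset.range m).erase 0, (-1 : ℂ) * (-1 - ζ ^ a) := by
          apply Finset.prod_congr rfl; intro a _; ring
      _ = (-1) ^ ((Finset.range m).erase 0).card *
          ∏ a ∈ (Finset.range m).erase 0, ((-1 : ℂ) - ζ ^ a) := by
          rw [Finset.prod_mul_distrib, Finset.prod_const]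
      _ = 1 := by
          rw [h1, hcard, mul_one, Even.neg_one_pow]
          obtain ⟨k, hk⟩ := ho; exact ⟨k, by omega⟩

lemma sq_two_cos_eq_normSq (m : ℕ) (hm : 1 ≤ m) (a : ℕ) :
    (2 * Real.cos (a * Real.pi / m)) ^ 2 =
    Complex.normSq (1 + Complex.exp (2 * Real.pi * Complex.I / m) ^ a) := by
  have hm0 : (m : ℝ) ≠ 0 := Nat.cast_ne_zero.mpr (by omega)
  set x : ℝ := a * Real.pi / m with hx
  have hζa : Complex.exp (2 * Real.pi * Complex.I / m) ^ a =
      Complex.exp ((2 * x : ℝ) * Complex.I) := by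
    rw [← Complex.exp_nat_mul]
    congr 1
    rw [hx]
    push_cast
    field_simp
  rw [hζa, Complex.exp_mul_I]
  rw [Complex.normSq_apply]
  simp only [Complex.add_re, Complex.add_im, Complex.one_re, Complex.one_im,
    Complex.mul_re, Complex.mul_im, Complex.I_re, Complex.I_im,
    Complex.cos_ofReal_re, Complex.cos_ofReal_im, Complex.sin_ofReal_re,
    Complex.sin_ofReal_im]
  linear_combination (-2) * Real.cos_two_mul x - Real.sin_sq_add_cos_sq (2 * x)

/-- For every integer m ≥ 1, the product over integers a with 1 ≤ a < m/2 of
(2cos(aπ/m))² equals 1 if m is odd and m/2 if m is even.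
(For a natural number a, the condition a < m/2 is expressed as 2a < m.) -/
theorem prod_sq_two_cos (m : ℕ) (hm : 1 ≤ m) :
    ∏ a ∈ (Finset.range m).filter (fun a => 1 ≤ a ∧ 2 * a < m),
      (2 * Real.cos (a * Real.pi / m)) ^ 2 =
    if m % 2 = 1 then 1 else (m : ℝ) / 2 := by
  have hm0 : (m : ℝ) ≠ 0 := Nat.cast_ne_zero.mpr (by omega)
  set f : ℕ → ℝ := fun a => (2 * Real.cos (a * Real.pi / m)) ^ 2 with hf
  set S := (Finset.range m).filter (fun a => 1 ≤ a ∧ 2 * a < m) with hS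
  set T := (Finset.range m).filter (fun a => m < 2 * a) with hT
  set D := (Finset.range m).filter (fun a => 1 ≤ a ∧ 2 * a ≠ m) with hD
  have hTS : ∏ a ∈ T, f a = ∏ a ∈ S, f a := by
    refine Finset.prod_nbij' (fun a => m - a) (fun a => m - a) ?_ ?_ ?_ ?_ ?_
    · intro a ha
      simp only [hT, hS, Finset.mem_filter, Finset.mem_range] at ha ⊢
      omega
    · intro a ha
      simp only [hT, hS, Finset.mem_filter, Finset.mem_range] at ha ⊢
      omega
    · intro a ha
      simp only [hT, Finset.mem_filter, Finset.mem_range] at ha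
      show m - (m - a) = a
      omega
    · intro a ha
      simp only [hS, Finset.mem_filter, Finset.mem_range] at ha
      show m - (m - a) = a
      omega
    · intro a ha
      simp only [hT, Finset.mem_filter, Finset.mem_range] at ha
      have hcast : ((m - a : ℕ) : ℝ) = (m : ℝ) - a := by
        rw [Nat.cast_sub (by omega)]
      simp only [hf, hcast]
      have : ((m : ℝ) - a) * Real.pi / m = Real.pi - a * Real.pi / m := by
        field_simp
      rw [this, Real.cos_pi_sub]
      ring
  have hunion : D = S ∪ T := by
    ext a
    simp only [hD, hS, hT, Finset.mem_union, Finset.mem_filter, Finset.mem_range]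
    omega
  have hdisj : Disjoint S T := by
    rw [Finset.disjoint_left]
    intro a haS haT
    simp only [hS, hT, Finset.mem_filter, Finset.mem_range] at haS haT
    omega
  have hsq : (∏ a ∈ S, f a) * (∏ a ∈ S, f a) = ∏ a ∈ D, f a := by
    rw [hunion, Finset.prod_union hdisj, hTS]
  have hkey : ∏ a ∈ D, f a =
      Complex.normSq (∏ a ∈ D, (1 + Complex.exp (2 * Real.pi * Complex.I / m) ^ a)) := by
    rw [map_prod]
    exact Finset.prod_congr rfl fun a _ => sq_two_cos_eq_normSq m hm a
  rw [prod_one_add_zeta m hm] at hkey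
  have hP : 0 ≤ ∏ a ∈ S, f a := Finset.prod_nonneg fun a _ => sq_nonneg _
  rcases Nat.even_or_odd m with he | ho
  · obtain ⟨k, hk⟩ := he
    rw [if_neg (by omega : ¬ m % 2 = 1)] at hkey ⊢
    have hval : Complex.normSq ((m : ℂ) / 2) = ((m : ℝ) / 2) ^ 2 := by
      have : ((m : ℂ) / 2) = (((m : ℝ) / 2 : ℝ) : ℂ) := by push_cast; ring
      rw [this, Complex.normSq_ofReal]; ring
    rw [hval] at hkey
    rw [hkey] at hsq
    have hpos : (0 : ℝ) ≤ (m : ℝ) / 2 := by positivity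
    nlinarith [hsq, hP, hpos]
  · rw [if_pos (Nat.odd_iff.mp ho)] at hkey ⊢
    rw [Complex.normSq_one] at hkey
    rw [hkey] at hsq
    nlinarith [hsq, hP]
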